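/- Let f : X → ℝ be M-Lipschitz, let γ > 0, ε ≥ 0, and let φ = φ_{γ, εM} be the ramp function with parameters γ and c = εM. Then for any distribution D on X × {−1,1} and any sample (x₁,y₁),…,(xₙ,yₙ): err_D(f, ε) ≤ E_{(x,y)∼D}[φ(−y f(x))], and (1/n)Σᵢ φ(−yᵢ f(xᵢ)) ≤ (1/n)Σᵢ 1{yᵢ f(xᵢ) < γ + εM}. -/

import Mathlib

open MeasureTheory

/-- Sandwich inequalities for the ramp loss `φ = φ_{γ, εM}`:
`err_D(f, ε) ≤ E[φ(−y f(x))]` and the empirical `φ`-loss is bounded by the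
empirical margin loss at level `γ + εM`. -/
theorem ramp_sandwich {X : Type*} [NormedAddCommGroup X] [NormedSpace ℝ X]
    [MeasurableSpace X] [BorelSpace X]
    (f : X → ℝ) (M : NNReal) (hf : LipschitzWith M f)
    (γ : ℝ) (hγ : 0 < γ) (ε : ℝ) (hε : 0 ≤ ε)
    (D : Measure (X × ℝ)) [IsProbabilityMeasure D]
    (hlab : D {p : X × ℝ | p.2 = 1 ∨ p.2 = -1} = 1)
    (n : ℕ) (x : Fin n → X) (y : Fin n → ℝ) (hy : ∀ i, y i = 1 ∨ y i = -1) :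
    (D {p : X × ℝ | ∃ δ : X, ‖δ‖ ≤ ε ∧ p.2 * f (p.1 + δ) < 0}).toReal ≤
      ∫ p, min 1 (max 0 (1 + (-(p.2 * f p.1) + ε * M) / γ)) ∂D ∧
    (1 / n : ℝ) * ∑ i, min 1 (max 0 (1 + (-(y i * f (x i)) + ε * M) / γ)) ≤
      (1 / n : ℝ) * ∑ i, (if y i * f (x i) < γ + ε * M then (1 : ℝ) else 0) := by
  constructor
  · -- measurability of the basic map
    have hg : Measurable (fun p : X × ℝ => p.2 * f p.1) :=
      measurable_snd.mul (hf.continuous.measurable.comp measurable_fst)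
    set U : Set (X × ℝ) := {p | p.2 * f p.1 ≤ ε * M} with hU
    have hUmeas : MeasurableSet U := hg measurableSet_Iic
    set L : Set (X × ℝ) := {p : X × ℝ | p.2 = 1 ∨ p.2 = -1} with hL
    have hLmeas : MeasurableSet L := by
      apply MeasurableSet.union
      · exact measurable_snd (measurableSet_singleton 1)
      · exact measurable_snd (measurableSet_singleton (-1))
    have hLc : D Lᶜ = 0 := by
      have := measure_compl hLmeas (measure_ne_top D L)
      rw [this, hlab, measure_univ, tsub_self]
    -- inclusion
    have hsub : {p : X × ℝ | ∃ δ : X, ‖δ‖ ≤ ε ∧ p.2 * f (p.1 + δ) < 0} ⊆ U ∪ Lᶜ := by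
      intro p hp
      obtain ⟨δ, hδ, hlt⟩ := hp
      by_cases hpl : p.2 = 1 ∨ p.2 = -1
      · left
        have hdist : |f p.1 - f (p.1 + δ)| ≤ ε * M := by
          have h1 := hf.dist_le_mul p.1 (p.1 + δ)
          rw [dist_self_add_right] at h1
          have h2 : (M : ℝ) * ‖δ‖ ≤ (M : ℝ) * ε := by
            apply mul_le_mul_of_nonneg_left hδ M.coe_nonneg
          calc |f p.1 - f (p.1 + δ)| = dist (f p.1) (f (p.1 + δ)) := (Real.dist_eq _ _).symm
            _ ≤ (M : ℝ) * ‖δ‖ := h1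
            _ ≤ (M : ℝ) * ε := h2
            _ = ε * M := mul_comm _ _
        have habs := abs_le.mp hdist
        rcases hpl with h | h <;> simp only [hU, Set.mem_setOf_eq, h] <;> nlinarith
      · right; exact hpl
    have hmono : D {p : X × ℝ | ∃ δ : X, ‖δ‖ ≤ ε ∧ p.2 * f (p.1 + δ) < 0} ≤ D U := by
      calc D {p : X × ℝ | ∃ δ : X, ‖δ‖ ≤ ε ∧ p.2 * f (p.1 + δ) < 0}
          ≤ D (U ∪ Lᶜ) := measure_mono hsub
        _ ≤ D U + D Lᶜ := measure_union_le _ _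
        _ = D U := by rw [hLc, add_zero]
    have htoReal : (D {p : X × ℝ | ∃ δ : X, ‖δ‖ ≤ ε ∧ p.2 * f (p.1 + δ) < 0}).toReal
        ≤ (D U).toReal := ENNReal.toReal_mono (measure_ne_top D U) hmono
    refine le_trans htoReal ?_
    -- (D U).toReal = ∫ indicator ≤ ∫ φ
    have hind : (D U).toReal = ∫ p, U.indicator (fun _ => (1 : ℝ)) p ∂D := by
      rw [integral_indicator_const _ hUmeas]; simp; rfl
    rw [hind]
    have hφmeas : Measurable (fun p : X × ℝ =>
        min 1 (max 0 (1 + (-(p.2 * f p.1) + ε * M) / γ))) := by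
      apply Measurable.min measurable_const
      apply Measurable.max measurable_const
      exact (measurable_const.add (((hg.neg).add measurable_const).div_const γ))
    have hφint : Integrable (fun p : X × ℝ =>
        min 1 (max 0 (1 + (-(p.2 * f p.1) + ε * M) / γ))) D := by
      apply (integrable_const (1 : ℝ)).mono' hφmeas.aestronglyMeasurable
      filter_upwards with p
      rw [Real.norm_eq_abs, abs_le]
      constructor
      · have h0 : (0:ℝ) ≤ min 1 (max 0 (1 + (-(p.2 * f p.1) + ε * M) / γ)) :=
          le_min zero_le_one (le_max_left _ _)
        linarith
      · exact min_le_left _ _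
    apply integral_mono _ hφint
    · intro p
      by_cases hp : p ∈ U
      · rw [Set.indicator_of_mem hp]
        refine le_min le_rfl ?_
        refine le_max_of_le_right ?_
        have hnum : 0 ≤ -(p.2 * f p.1) + ε * M := by
          simp only [hU, Set.mem_setOf_eq] at hp; linarith
        have := div_nonneg hnum hγ.le
        linarith
      · rw [Set.indicator_of_notMem hp]
        exact le_min zero_le_one (le_max_left _ _)
    · exact (integrable_const (1 : ℝ)).indicator hUmeas
  · -- empirical part
    apply mul_le_mul_of_nonneg_left _ (by positivity)
    apply Finset.sum_le_sum
    intro i _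
    by_cases h : y i * f (x i) < γ + ε * M
    · rw [if_pos h]; exact min_le_left _ _
    · rw [if_neg h]
      push_neg at h
      have hle : 1 + (-(y i * f (x i)) + ε * M) / γ ≤ 0 := by
        have hd : (-(y i * f (x i)) + ε * M) / γ ≤ -1 := by
          rw [div_le_iff₀ hγ]; linarith
        linarith
      calc min 1 (max 0 (1 + (-(y i * f (x i)) + ε * M) / γ))
          ≤ max 0 (1 + (-(y i * f (x i)) + ε * M) / γ) := min_le_right _ _
        _ = 0 := max_eq_left hle
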